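/- Let X be a uniquely geodesic Busemann nonpositively curved space and p ∈ X. The angle function ∠_p defined by ∠_p(c₁, c₂) = lim_{t→0⁺} d(c₁(t), c₂(t))/t on unit-speed geodesics emanating from p satisfies the triangle inequality: ∠_p(c₁, c₃) ≤ ∠_p(c₁, c₂) + ∠_p(c₂, c₃). -/

import Mathlib

/-- A constant-speed globally minimizing geodesic line. -/
def IsGeodesicLine {X : Type*} [MetricSpace X] (speed : ℝ) (γ : ℝ → X) : Prop :=
  ∀ s t : ℝ, dist (γ s) (γ t) = speed * |s - t|

/-- Busemann nonpositive curvature: distance between geodesics is convex. -/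
def BusemannConvex (X : Type*) [MetricSpace X] : Prop :=
  ∀ (α β : ℝ → X) (a b : ℝ), IsGeodesicLine a α → IsGeodesicLine b β →
    ConvexOn ℝ Set.univ (fun t => dist (α t) (β t))

/-- Uniquely geodesic metric space. -/
def UniquelyGeodesic (X : Type*) [MetricSpace X] : Prop :=
  ∀ x y : X, ∃! γ : ℝ → X, γ 0 = x ∧ γ 1 = y ∧ IsGeodesicLine (dist x y) γ

/-- The angle ∠_p, defined as lim_{t→0⁺} d(c₁(t),c₂(t))/t on
unit-speed geodesics emanating from p, satisfies the triangle inequality. -/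
theorem angle_triangle_inequality
    {X : Type*} [MetricSpace X]
    (huniq : UniquelyGeodesic X) (hconv : BusemannConvex X)
    (c₁ c₂ c₃ : ℝ → X) (p : X)
    (h₁ : IsGeodesicLine 1 c₁) (h₂ : IsGeodesicLine 1 c₂) (h₃ : IsGeodesicLine 1 c₃)
    (hp₁ : c₁ 0 = p) (hp₂ : c₂ 0 = p) (hp₃ : c₃ 0 = p)
    (A₁₂ A₂₃ A₁₃ : ℝ)
    (hA₁₂ : Filter.Tendsto (fun t => dist (c₁ t) (c₂ t) / t)
        (nhdsWithin 0 (Set.Ioi 0)) (nhds A₁₂))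
    (hA₂₃ : Filter.Tendsto (fun t => dist (c₂ t) (c₃ t) / t)
        (nhdsWithin 0 (Set.Ioi 0)) (nhds A₂₃))
    (hA₁₃ : Filter.Tendsto (fun t => dist (c₁ t) (c₃ t) / t)
        (nhdsWithin 0 (Set.Ioi 0)) (nhds A₁₃)) :
    A₁₃ ≤ A₁₂ + A₂₃ := by
  refine le_of_tendsto_of_tendsto hA₁₃ (hA₁₂.add hA₂₃) ?_
  filter_upwards [self_mem_nhdsWithin] with t (ht : t ∈ Set.Ioi 0)
  rw [← add_div]
  exact div_le_div_of_nonneg_right (dist_triangle _ _ _) ht.le |>.trans_eq rfl
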